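/- arXiv:1107.5985 — 2 statements merged into one kernel-verified Lean document; each statement's English description precedes it below -/
import Mathlib

section
/- Let X be a Polish space. A sequence of X-valued random variables (x_n) defined on a probability space converges in probability if and only if for every pair of subsequences (x_{n_k}) and (x_{m_k}), there exists a further subsequence such that the joint laws of (x_{n_{k_i}}, x_{m_{k_i}}) converge weakly to a probability measure ν on X × X satisfying ν({(x,y) ∈ X × X : x = y}) = 1. -/
open MeasureTheory Filter
open scoped ENNReal

noncomputable def gkBCF {X : Type*} [MetricSpace X] (ε : ℝ) (hε : 0 < ε) :
    BoundedContinuousFunction (X × X) ℝ :=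
  BoundedContinuousFunction.ofNormedAddCommGroup
    (fun p => min 1 (ε⁻¹ * dist p.1 p.2))
    (continuous_const.min (continuous_const.mul continuous_dist)) 1
    (fun p => by
      have h0 : 0 ≤ ε⁻¹ * dist p.1 p.2 := mul_nonneg (inv_nonneg.2 hε.le) dist_nonneg
      rw [Real.norm_eq_abs, abs_of_nonneg (le_min zero_le_one h0)]
      exact min_le_left _ _)

theorem gkBCF_nonneg {X : Type*} [MetricSpace X] (ε : ℝ) (hε : 0 < ε) (p : X × X) :
    0 ≤ gkBCF ε hε p := by
  simp only [gkBCF, BoundedContinuousFunction.coe_ofNormedAddCommGroup]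
  exact le_min zero_le_one (mul_nonneg (inv_nonneg.2 hε.le) dist_nonneg)

theorem gkBCF_eq_one {X : Type*} [MetricSpace X] (ε : ℝ) (hε : 0 < ε) {p : X × X}
    (h : ε ≤ dist p.1 p.2) : gkBCF ε hε p = 1 := by
  simp only [gkBCF, BoundedContinuousFunction.coe_ofNormedAddCommGroup]
  have : 1 ≤ ε⁻¹ * dist p.1 p.2 := by
    have := mul_le_mul_of_nonneg_left h (inv_nonneg.2 hε.le)
    rwa [inv_mul_cancel₀ hε.ne'] at this
  exact min_eq_left this

theorem gkBCF_eq_zero {X : Type*} [MetricSpace X] (ε : ℝ) (hε : 0 < ε) {p : X × X}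
    (h : p.1 = p.2) : gkBCF ε hε p = 0 := by
  simp [gkBCF, BoundedContinuousFunction.coe_ofNormedAddCommGroup, h]

/-- Gyöngy–Krylov lemma: on a Polish space `X`, a sequence of `X`-valued
random variables `(x_n)` converges in probability iff for every pair of subsequences
there is a further subsequence along which the joint laws converge weakly to a
probability measure `ν` on `X × X` concentrated on the diagonal. -/
theorem stmt4 {Ω : Type*} [MeasurableSpace Ω] (P : Measure Ω) [IsProbabilityMeasure P]
    {X : Type*} [MetricSpace X] [CompleteSpace X] [TopologicalSpace.SeparableSpace X]
    [MeasurableSpace X] [BorelSpace X]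
    (x : ℕ → Ω → X) (hx : ∀ n, Measurable (x n)) :
    (∃ y : Ω → X, Measurable y ∧ TendstoInMeasure P x atTop y) ↔
      (∀ n m : ℕ → ℕ, StrictMono n → StrictMono m →
        ∃ k : ℕ → ℕ, StrictMono k ∧
          ∃ ν : Measure (X × X), IsProbabilityMeasure ν ∧
            (∀ f : BoundedContinuousFunction (X × X) ℝ,
              Tendsto (fun i => ∫ ω, f (x (n (k i)) ω, x (m (k i)) ω) ∂P) atTop
                (nhds (∫ p, f p ∂ν))) ∧
            ν {p : X × X | p.1 = p.2} = 1) := by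
  have hDmeas : MeasurableSet {p : X × X | p.1 = p.2} :=
    (isClosed_eq continuous_fst continuous_snd).measurableSet
  constructor
  · rintro ⟨y, hym, hy⟩ n m hn hm
    have hyn : TendstoInMeasure P (fun i => x (n i)) atTop y :=
      fun ε hε => (hy ε hε).comp hn.tendsto_atTop
    obtain ⟨k1, hk1, hae1⟩ := hyn.exists_seq_tendsto_ae
    have hymm : TendstoInMeasure P (fun i => x (m (k1 i))) atTop y :=
      fun ε hε => (hy ε hε).comp (hm.comp hk1).tendsto_atTop
    obtain ⟨k2, hk2, hae2⟩ := hymm.exists_seq_tendsto_ae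
    refine ⟨k1 ∘ k2, hk1.comp hk2, P.map (fun ω => (y ω, y ω)), ?_, ?_, ?_⟩
    · exact Measure.isProbabilityMeasure_map (hym.prodMk hym).aemeasurable
    · intro f
      have hmap : ∫ p, f p ∂(P.map (fun ω => (y ω, y ω))) = ∫ ω, f (y ω, y ω) ∂P :=
        integral_map (hym.prodMk hym).aemeasurable f.continuous.measurable.aestronglyMeasurable
      rw [hmap]
      have haepair : ∀ᵐ ω ∂P, Tendsto
          (fun i => ((x (n (k1 (k2 i))) ω, x (m (k1 (k2 i))) ω) : X × X)) atTop
          (nhds (y ω, y ω)) := by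
        filter_upwards [hae1, hae2] with ω h1 h2
        exact (h1.comp hk2.tendsto_atTop).prodMk_nhds h2
      refine tendsto_integral_of_dominated_convergence (fun _ => ‖f‖)
        (fun i => (f.continuous.measurable.comp
          ((hx _).prodMk (hx _))).aestronglyMeasurable)
        (integrable_const _)
        (fun i => Filter.Eventually.of_forall (fun ω => f.norm_coe_le_norm _)) ?_
      filter_upwards [haepair] with ω hω
      exact (f.continuous.tendsto _).comp hω
    · rw [Measure.map_apply (hym.prodMk hym) hDmeas]
      have : (fun ω => ((y ω, y ω) : X × X)) ⁻¹' {p : X × X | p.1 = p.2} = Set.univ := by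
        ext ω; simp
      rw [this, measure_univ]
  · intro h
    classical
    -- Step 1: the sequence is Cauchy in measure
    have key : ∀ ε : ℝ, 0 < ε → ∀ δ : ℝ, 0 < δ → ∃ N : ℕ, ∀ p q : ℕ, N ≤ p → N ≤ q →
        (P {ω | ε ≤ dist (x p ω) (x q ω)}).toReal < δ := by
      by_contra hcon
      push_neg at hcon
      obtain ⟨ε, hε, δ, hδ, H⟩ := hcon
      choose a b ha hb hab using H
      set N : ℕ → ℕ := fun k => Nat.rec 0 (fun _ prev => max (a prev) (b prev) + 1) k with hNdef
      have hN_succ : ∀ k, N (k + 1) = max (a (N k)) (b (N k)) + 1 := fun k => rfl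
      have hnmono : StrictMono (fun k => a (N k)) := by
        refine strictMono_nat_of_lt_succ fun k => ?_
        calc a (N k) < max (a (N k)) (b (N k)) + 1 :=
              Nat.lt_succ_of_le (le_max_left _ _)
          _ = N (k + 1) := (hN_succ k).symm
          _ ≤ a (N (k + 1)) := ha _
      have hmmono : StrictMono (fun k => b (N k)) := by
        refine strictMono_nat_of_lt_succ fun k => ?_
        calc b (N k) < max (a (N k)) (b (N k)) + 1 :=
              Nat.lt_succ_of_le (le_max_right _ _)
          _ = N (k + 1) := (hN_succ k).symm
          _ ≤ b (N (k + 1)) := hb _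
      obtain ⟨k, hk, ν, hν, hweak, hdiag⟩ := h _ _ hnmono hmmono
      set g := gkBCF (X := X) ε hε with hg
      have hνnull : ν ({p : X × X | p.1 = p.2}ᶜ) = 0 := by
        have hc := measure_compl hDmeas (measure_ne_top ν _)
        rw [hdiag, measure_univ] at hc
        simpa using hc
      have hint0 : ∫ pp, g pp ∂ν = 0 := by
        refine integral_eq_zero_of_ae ?_
        rw [Filter.EventuallyEq, ae_iff]
        refine measure_mono_null (fun pp hpp => ?_) hνnull
        simp only [Set.mem_setOf_eq, Pi.zero_apply] at hpp
        simp only [Set.mem_compl_iff, Set.mem_setOf_eq]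
        intro heq
        exact hpp (gkBCF_eq_zero ε hε heq)
      have hlow : ∀ i, δ ≤ ∫ ω, g (x (a (N (k i))) ω, x (b (N (k i))) ω) ∂P := by
        intro i
        refine le_trans (hab (N (k i))) ?_
        set s := {ω | ε ≤ dist (x (a (N (k i))) ω) (x (b (N (k i))) ω)} with hsdef
        have hs : MeasurableSet s :=
          measurableSet_le measurable_const ((hx _).dist (hx _))
        have hind : ∫ ω, s.indicator (fun _ => (1 : ℝ)) ω ∂P = (P s).toReal :=
          integral_indicator_one hs
        rw [← hind]
        refine integral_mono ((integrable_const (1 : ℝ)).indicator hs)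
          (Integrable.mono' (integrable_const ‖g‖)
            ((g.continuous.measurable.comp ((hx _).prodMk (hx _))).aestronglyMeasurable)
            (Filter.Eventually.of_forall fun ω => g.norm_coe_le_norm _)) ?_
        intro ω
        by_cases hω : ω ∈ s
        · rw [Set.indicator_of_mem hω]
          have hd : ε ≤ dist (x (a (N (k i))) ω) (x (b (N (k i))) ω) := hω
          have h1 := gkBCF_eq_one ε hε (p := (x (a (N (k i))) ω, x (b (N (k i))) ω)) hd
          simpa using h1.ge
        · rw [Set.indicator_of_notMem hω]
          exact gkBCF_nonneg ε hε _
      have htend := hweak g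
      rw [hint0] at htend
      obtain ⟨i, hi⟩ := (htend.eventually_lt_const hδ).exists
      exact absurd (hlow i) (not_le.2 hi)
    -- Step 2: construct an a.e. limit along a fast subsequence
    choose M hM using fun j : ℕ => key ((2 : ℝ)⁻¹ ^ j) (by positivity) ((2 : ℝ)⁻¹ ^ j) (by positivity)
    set φ : ℕ → ℕ := fun j => Nat.rec (M 0) (fun j prev => max (prev + 1) (M (j + 1))) j with hφdef
    have hφ_succ : ∀ j, φ (j + 1) = max (φ j + 1) (M (j + 1)) := fun j => rfl
    have hφmono : StrictMono φ := by
      refine strictMono_nat_of_lt_succ fun j => ?_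
      rw [hφ_succ]
      exact lt_of_lt_of_le (Nat.lt_succ_self _) (le_max_left _ _)
    have hφM : ∀ j, M j ≤ φ j := by
      intro j
      cases j with
      | zero => exact le_rfl
      | succ j => rw [hφ_succ]; exact le_max_right _ _
    set S : ℕ → Set Ω := fun j => {ω | (2 : ℝ)⁻¹ ^ j ≤ dist (x (φ j) ω) (x (φ (j + 1)) ω)}
      with hSdef
    have hSle : ∀ j, P (S j) ≤ (2 : ℝ≥0∞)⁻¹ ^ j := by
      intro j
      have h1 := hM j (φ j) (φ (j + 1)) (hφM j)
        (le_trans (hφM j) (hφmono (Nat.lt_succ_self j)).le)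
      have h2 : P (S j) < ENNReal.ofReal ((2 : ℝ)⁻¹ ^ j) :=
        (ENNReal.lt_ofReal_iff_toReal_lt (measure_ne_top _ _)).2 h1
      refine h2.le.trans (le_of_eq ?_)
      rw [ENNReal.ofReal_pow (by norm_num), ENNReal.ofReal_inv_of_pos (by norm_num)]
      norm_num
    have hsum : ∑' j, P (S j) ≠ ⊤ := by
      refine ne_top_of_le_ne_top ?_ (ENNReal.tsum_le_tsum hSle)
      simpa only [ENNReal.tsum_geometric, ENNReal.one_sub_inv_two, inv_inv] using
        ENNReal.ofNat_ne_top
    have haeC : ∀ᵐ ω ∂P, ∃ l : X, Tendsto (fun j => x (φ j) ω) atTop (nhds l) := by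
      filter_upwards [ae_finite_setOf_mem hsum] with ω hω
      obtain ⟨K, hK⟩ := hω.bddAbove
      have hsummable : Summable (fun j => dist (x (φ j) ω) (x (φ (j + 1)) ω)) := by
        rw [← _root_.summable_nat_add_iff (K + 1)]
        refine Summable.of_nonneg_of_le (fun _ => dist_nonneg) (fun n => ?_)
          ((summable_geometric_of_lt_one (r := (2:ℝ)⁻¹) (by norm_num) (by norm_num)).mul_right
            ((2 : ℝ)⁻¹ ^ (K + 1)))
        have hnot : ω ∉ S (n + (K + 1)) := by
          intro hin
          have := hK hin
          omega
        simp only [hSdef, Set.mem_setOf_eq, not_le] at hnot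
        rw [← pow_add]
        exact hnot.le
      exact cauchySeq_tendsto_of_complete (cauchySeq_of_summable_dist hsummable)
    set y0 : Ω → X := fun ω =>
      if hω : ∃ l : X, Tendsto (fun j => x (φ j) ω) atTop (nhds l) then hω.choose
      else x 0 ω with hy0def
    have hy0t : ∀ᵐ ω ∂P, Tendsto (fun j => x (φ j) ω) atTop (nhds (y0 ω)) := by
      filter_upwards [haeC] with ω hω
      simp only [hy0def, dif_pos hω]
      exact hω.choose_spec
    have hy0m : AEMeasurable y0 P :=
      aemeasurable_of_tendsto_metrizable_ae atTop (fun j => (hx (φ j)).aemeasurable) hy0t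
    refine ⟨hy0m.mk y0, hy0m.measurable_mk, ?_⟩
    have hyt : ∀ᵐ ω ∂P, Tendsto (fun j => x (φ j) ω) atTop (nhds (hy0m.mk y0 ω)) := by
      filter_upwards [hy0t, hy0m.ae_eq_mk] with ω h1 h2
      rwa [h2] at h1
    have hφy : TendstoInMeasure P (fun j => x (φ j)) atTop (hy0m.mk y0) :=
      tendstoInMeasure_of_tendsto_ae (fun j => (hx (φ j)).aestronglyMeasurable) hyt
    refine tendstoInMeasure_iff_dist.2 fun ε hε => ?_
    rw [ENNReal.tendsto_nhds_zero]
    intro δ hδ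
    obtain ⟨r, hr0, hrδ⟩ : ∃ r : ℝ, 0 < r ∧ ENNReal.ofReal r ≤ δ := by
      rcases eq_or_ne δ ⊤ with hT | hT
      · exact ⟨1, one_pos, hT ▸ le_top⟩
      · exact ⟨δ.toReal, ENNReal.toReal_pos hδ.ne' hT, (ENNReal.ofReal_toReal hT).le⟩
    obtain ⟨N, hN⟩ := key (ε / 2) (half_pos hε) (r / 2) (half_pos hr0)
    have h2 := (ENNReal.tendsto_nhds_zero.1 ((tendstoInMeasure_iff_dist.1 hφy) (ε / 2) (half_pos hε)))
      (ENNReal.ofReal (r / 2)) (by simp [ENNReal.ofReal_pos, half_pos hr0])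
    obtain ⟨K, hK⟩ := eventually_atTop.1 h2
    set k0 := max K N with hk0def
    have hφk0 : N ≤ φ k0 := le_trans (le_max_right K N) hφmono.le_apply
    filter_upwards [eventually_ge_atTop N] with p hp
    have hsub : {ω | ε ≤ dist (x p ω) (hy0m.mk y0 ω)} ⊆
        {ω | ε / 2 ≤ dist (x p ω) (x (φ k0) ω)} ∪
          {ω | ε / 2 ≤ dist (x (φ k0) ω) (hy0m.mk y0 ω)} := by
      intro ω hω
      by_contra hc
      simp only [Set.mem_union, Set.mem_setOf_eq, not_or, not_le] at hc
      simp only [Set.mem_setOf_eq] at hω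
      have := dist_triangle (x p ω) (x (φ k0) ω) (hy0m.mk y0 ω)
      linarith
    have hA : P {ω | ε / 2 ≤ dist (x p ω) (x (φ k0) ω)} ≤ ENNReal.ofReal (r / 2) :=
      ((ENNReal.lt_ofReal_iff_toReal_lt (measure_ne_top _ _)).2
        (hN p (φ k0) hp hφk0)).le
    have hB : P {ω | ε / 2 ≤ dist (x (φ k0) ω) (hy0m.mk y0 ω)} ≤ ENNReal.ofReal (r / 2) :=
      hK k0 (le_max_left K N)
    calc P {ω | ε ≤ dist (x p ω) (hy0m.mk y0 ω)}
        ≤ P ({ω | ε / 2 ≤ dist (x p ω) (x (φ k0) ω)} ∪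
            {ω | ε / 2 ≤ dist (x (φ k0) ω) (hy0m.mk y0 ω)}) := measure_mono hsub
      _ ≤ _ + _ := measure_union_le _ _
      _ ≤ ENNReal.ofReal (r / 2) + ENNReal.ofReal (r / 2) := add_le_add hA hB
      _ = ENNReal.ofReal r := by
          rw [← ENNReal.ofReal_add (by linarith) (by linarith), add_halves]
      _ ≤ δ := hrδ
end

section
/- Let W be a standard one-dimensional Brownian motion on [0,T]. For L > 0 define Σ_L = { ω : for all n ≥ 1, sup_{|t-s| ≤ n^{-6}, t,s ∈ [0,T]} |W(t,ω) - W(s,ω)| ≤ L/n }. Then there is a constant C depending only on T such that P(W ∉ Σ_L) ≤ C / L^4. Consequently, for every ε > 0 there exists L_ε with P(W ∉ Σ_{L_ε}) ≤ ε. -/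
open MeasureTheory Real Set ProbabilityTheory
open scoped NNReal ENNReal
set_option linter.unusedSectionVars false
set_option linter.unusedVariables false
set_option maxHeartbeats 1000000

lemma integral_pow_four_exp (b : ℝ) (hb : 0 < b) :
    ∫ x : ℝ, x ^ 4 * rexp (-b * x ^ 2) = 3 / (4 * b ^ 2) * Real.sqrt (π / b) := by
  have habs : (fun x : ℝ => x ^ 4 * rexp (-b * x ^ 2))
      = fun x : ℝ => |x| ^ 4 * rexp (-b * |x| ^ 2) := by
    funext x
    rw [show |x| ^ 4 = (|x| ^ 2) ^ 2 by ring, sq_abs]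
    ring_nf
  have h1 : ∫ x : ℝ, x ^ 4 * rexp (-b * x ^ 2)
      = 2 * ∫ x in Ioi (0:ℝ), x ^ 4 * rexp (-b * x ^ 2) := by
    conv_lhs => rw [habs]
    exact integral_comp_abs (f := fun x : ℝ => x ^ 4 * rexp (-b * x ^ 2))
  have h2 : ∫ x in Ioi (0:ℝ), x ^ 4 * rexp (-b * x ^ 2)
      = ∫ y in Ioi (0:ℝ), (1/2 : ℝ) * (y ^ ((3:ℝ)/2) * rexp (-(b * y))) := by
    rw [← integral_comp_rpow_Ioi_of_pos (p := 2)
      (g := fun y => (1/2 : ℝ) * (y ^ ((3:ℝ)/2) * rexp (-(b * y)))) zero_lt_two]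
    refine setIntegral_congr_fun measurableSet_Ioi (fun x hx => ?_)
    have hx0 : (0:ℝ) < x := hx
    have hxx : (x ^ (2:ℝ)) ^ ((3:ℝ)/2) = x ^ (3:ℝ) := by
      rw [← Real.rpow_mul hx0.le]; norm_num
    have h2x : x ^ (2:ℝ) = x ^ 2 := by
      rw [show ((2:ℝ)) = ((2:ℕ):ℝ) by norm_num, Real.rpow_natCast]
    have h3x : x ^ (3:ℝ) = x ^ 3 := by
      rw [show ((3:ℝ)) = ((3:ℕ):ℝ) by norm_num, Real.rpow_natCast]
    simp only [smul_eq_mul]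
    rw [hxx, h2x, h3x]
    rw [show (2:ℝ) - 1 = 1 by norm_num, Real.rpow_one]
    ring_nf
  have h3 : ∫ y in Ioi (0:ℝ), y ^ ((3:ℝ)/2) * rexp (-(b * y))
      = (1/b) ^ ((5:ℝ)/2) * Real.Gamma (5/2) := by
    have := integral_rpow_mul_exp_neg_mul_Ioi (a := 5/2) (r := b) (by norm_num) hb
    rw [show (5:ℝ)/2 - 1 = 3/2 by norm_num] at this
    exact this
  have hG : Real.Gamma (5/2) = 3/4 * Real.sqrt π := by
    rw [show (5:ℝ)/2 = 3/2 + 1 by norm_num, Real.Gamma_add_one (by norm_num)]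
    rw [show (3:ℝ)/2 = 1/2 + 1 by norm_num, Real.Gamma_add_one (by norm_num)]
    rw [Real.Gamma_one_half_eq]
    ring
  have hb' : (0:ℝ) < 1/b := by positivity
  have h5 : (1/b : ℝ) ^ ((5:ℝ)/2) = Real.sqrt (1/b) / b ^ 2 := by
    have e2 : (1/b:ℝ) ^ ((2:ℝ)) = (1/b) ^ (2:ℕ) := by
      rw [← Real.rpow_natCast (1/b) 2]; norm_num
    rw [show (5:ℝ)/2 = 2 + 1/2 by norm_num, Real.rpow_add hb', e2, ← Real.sqrt_eq_rpow]
    rw [one_div, inv_pow]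
    ring
  have hsq : Real.sqrt (1/b) * Real.sqrt π = Real.sqrt (π / b) := by
    rw [← Real.sqrt_mul (by positivity) π, one_div, inv_mul_eq_div]
  rw [h1, h2, integral_const_mul, h3, hG, h5]
  rw [← hsq]
  ring

lemma integrable_pow_four_exp (b : ℝ) (hb : 0 < b) :
    Integrable (fun x : ℝ => x ^ 4 * rexp (-b * x ^ 2)) := by
  have := integrable_rpow_mul_exp_neg_mul_sq hb (s := 4) (by norm_num)
  refine this.congr (ae_of_all _ fun x => ?_)
  have h4 : x ^ (4:ℝ) = x ^ (4:ℕ) := by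
    rw [show ((4:ℝ)) = ((4:ℕ):ℝ) by norm_num, Real.rpow_natCast]
  simp only [h4]

lemma lintegral_pow_four_gaussianReal (v : ℝ≥0) :
    ∫⁻ x, ENNReal.ofReal (x ^ 4) ∂(gaussianReal 0 v) = ENNReal.ofReal (3 * (v:ℝ) ^ 2) := by
  have hmeas : Measurable fun y : ℝ => ENNReal.ofReal (y ^ 4) := by fun_prop
  by_cases hv : v = 0
  · subst hv
    rw [gaussianReal_zero_var, lintegral_dirac' _ hmeas]
    norm_num
  · have hv' : (0:ℝ) < v := lt_of_le_of_ne v.2 (by exact_mod_cast Ne.symm hv)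
    set b : ℝ := (2 * v)⁻¹ with hbdef
    have hb : 0 < b := by positivity
    rw [gaussianReal_of_var_ne_zero 0 hv,
      lintegral_withDensity_eq_lintegral_mul _ (measurable_gaussianPDF 0 v) hmeas]
    have hpt : ∀ x : ℝ, (gaussianPDF 0 v * fun x => ENNReal.ofReal (x ^ 4)) x
        = ENNReal.ofReal ((√(2 * π * v))⁻¹ * (x ^ 4 * rexp (-b * x ^ 2))) := by
      intro x
      simp only [Pi.mul_apply, gaussianPDF, gaussianPDFReal]
      rw [← ENNReal.ofReal_mul (by positivity)]
      congr 1
      have : -(x - 0) ^ 2 / (2 * v) = -b * x ^ 2 := by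
        rw [hbdef]; field_simp; ring
      rw [this]; ring
    simp_rw [hpt]
    rw [← ofReal_integral_eq_lintegral_ofReal
      (((integrable_pow_four_exp b hb).const_mul _))
      (ae_of_all _ fun x => by positivity)]
    congr 1
    rw [integral_const_mul, integral_pow_four_exp b hb]
    have h1 : π / b = 2 * π * v := by rw [hbdef]; field_simp
    have h2 : (4 * b ^ 2 : ℝ) = (v:ℝ)⁻¹ ^ 2 := by rw [hbdef]; field_simp; ring
    rw [h1, h2]
    have h3 : √(2 * π * v) ≠ 0 := by positivity
    field_simp
lemma gaussian_tail (v : ℝ≥0) {x : ℝ} (hx : 0 < x) :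
    gaussianReal 0 v {y | x ≤ |y|} ≤ ENNReal.ofReal (3 * (v:ℝ) ^ 2 / x ^ 4) := by
  have hsub : {y : ℝ | x ≤ |y|} ⊆ {y : ℝ | ENNReal.ofReal (x ^ 4) ≤ ENNReal.ofReal (y ^ 4)} := by
    intro y hy
    simp only [Set.mem_setOf_eq] at hy ⊢
    refine ENNReal.ofReal_le_ofReal ?_
    calc x ^ 4 ≤ |y| ^ 4 := pow_le_pow_left₀ hx.le hy 4
      _ = y ^ 4 := by rw [show |y|^4 = (|y|^2)^2 by ring, sq_abs]; ring
  have hmark := mul_meas_ge_le_lintegral₀ (μ := gaussianReal 0 v)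
    (f := fun y => ENNReal.ofReal (y ^ 4))
    ((by fun_prop : Measurable fun y : ℝ => ENNReal.ofReal (y ^ 4)).aemeasurable)
    (ENNReal.ofReal (x ^ 4))
  rw [lintegral_pow_four_gaussianReal] at hmark
  have h1 : gaussianReal 0 v {y | x ≤ |y|}
      ≤ gaussianReal 0 v {y | ENNReal.ofReal (x ^ 4) ≤ ENNReal.ofReal (y ^ 4)} :=
    measure_mono hsub
  have hx4 : (0:ℝ) < x ^ 4 := by positivity
  have h2 : gaussianReal 0 v {y | ENNReal.ofReal (x ^ 4) ≤ ENNReal.ofReal (y ^ 4)}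
      ≤ ENNReal.ofReal (3 * (v:ℝ) ^ 2) / ENNReal.ofReal (x ^ 4) := by
    rw [ENNReal.le_div_iff_mul_le (Or.inl (by simp [hx4])) (Or.inl ENNReal.ofReal_ne_top)]
    rw [mul_comm]
    exact hmark
  refine h1.trans (h2.trans ?_)
  rw [ENNReal.ofReal_div_of_pos hx4]

noncomputable def mufl (T : ℝ) (m : ℕ) (u : ℝ) : ℝ := (⌊u * 2 ^ m / T⌋₊ : ℝ) * T / 2 ^ m

section chaining
variable {f : ℝ → ℝ} {T b θ : ℝ} (hT : 0 < T) (hθ0 : 0 < θ) (hθ1 : θ < 1) (hb : 0 ≤ b)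

lemma mufl_le {u : ℝ} (hT : 0 < T) (hu0 : 0 ≤ u) (m : ℕ) : mufl T m u ≤ u := by
  unfold mufl
  rw [div_le_iff₀ (by positivity)]
  calc (⌊u * 2 ^ m / T⌋₊ : ℝ) * T ≤ (u * 2 ^ m / T) * T := by
        refine mul_le_mul_of_nonneg_right (Nat.floor_le (by positivity)) hT.le
    _ = u * 2 ^ m := by field_simp

lemma lt_mufl_add (hT : 0 < T) {u : ℝ} (hu0 : 0 ≤ u) (m : ℕ) : u < mufl T m u + T / 2 ^ m := by
  have h := Nat.lt_floor_add_one (u * 2 ^ m / T)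
  have h2 : u * 2 ^ m < ((⌊u * 2 ^ m / T⌋₊ : ℝ) + 1) * T := (div_lt_iff₀ hT).mp h
  have h2m : (0:ℝ) < 2 ^ m := by positivity
  calc u = u * 2 ^ m / 2 ^ m := by field_simp
    _ < ((⌊u * 2 ^ m / T⌋₊ : ℝ) + 1) * T / 2 ^ m := by gcongr
    _ = mufl T m u + T / 2 ^ m := by unfold mufl; ring

lemma mufl_nonneg (hT : 0 < T) (m : ℕ) (u : ℝ) : 0 ≤ mufl T m u := by
  unfold mufl; positivity

include hT hθ0 hθ1 hb in
lemma mufl_step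
    (H : ∀ m k : ℕ, k + 1 ≤ 2 ^ m → |f ((k + 1) * T / 2 ^ m) - f (k * T / 2 ^ m)| ≤ b * θ ^ m)
    {u : ℝ} (hu0 : 0 ≤ u) (huT : u ≤ T) (m : ℕ) :
    |f (mufl T (m + 1) u) - f (mufl T m u)| ≤ b * θ ^ (m + 1) := by
  set q : ℝ := u * 2 ^ m / T with hq
  have hq0 : 0 ≤ q := by positivity
  have hq2 : u * 2 ^ (m + 1) / T = 2 * q := by rw [hq]; ring
  set k : ℕ := ⌊q⌋₊ with hk
  have h1 : 2 * k ≤ ⌊2 * q⌋₊ := by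
    refine Nat.le_floor ?_
    push_cast
    nlinarith [Nat.floor_le hq0]
  have h2 : ⌊2 * q⌋₊ < 2 * k + 2 := by
    refine Nat.floor_lt (by positivity) |>.mpr ?_
    push_cast
    nlinarith [Nat.lt_floor_add_one q]
  have h3 : ⌊2 * q⌋₊ = 2 * k ∨ ⌊2 * q⌋₊ = 2 * k + 1 := by omega
  have hmu1 : mufl T (m + 1) u = (⌊2 * q⌋₊ : ℝ) * T / 2 ^ (m + 1) := by
    unfold mufl; rw [hq2]
  have hmu0 : mufl T m u = (k : ℝ) * T / 2 ^ m := by unfold mufl; rw [← hq, ← hk]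
  rcases h3 with h | h
  · have : mufl T (m + 1) u = mufl T m u := by
      rw [hmu1, hmu0, h]
      push_cast
      rw [pow_succ]
      ring
    rw [this, sub_self, abs_zero]
    positivity
  · have hle : 2 * k + 1 ≤ 2 ^ (m + 1) := by
      have hq3 : (2 * q : ℝ) ≤ 2 ^ (m + 1) := by
        rw [← hq2, div_le_iff₀ hT]
        calc u * 2 ^ (m + 1) ≤ T * 2 ^ (m + 1) := by
              exact mul_le_mul_of_nonneg_right huT (by positivity)
          _ = 2 ^ (m + 1) * T := by ring
      have h4 : ⌊2 * q⌋₊ ≤ 2 ^ (m + 1) := by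
        calc ⌊2 * q⌋₊ ≤ ⌊((2 ^ (m + 1) : ℕ) : ℝ)⌋₊ := Nat.floor_mono (by push_cast; linarith)
          _ = 2 ^ (m + 1) := Nat.floor_natCast _
      omega
    have hH := H (m + 1) (2 * k) hle
    rw [hmu1, hmu0, h]
    have e1 : ((2 * k + 1 : ℕ) : ℝ) = ((2 * k : ℕ) : ℝ) + 1 := by push_cast; ring
    have e2 : ((k : ℝ)) * T / 2 ^ m = ((2 * k : ℕ) : ℝ) * T / 2 ^ (m + 1) := by
      push_cast; rw [pow_succ]; ring
    rw [e1, e2]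
    exact hH

include hT hθ0 hθ1 hb in
lemma mufl_telescope
    (H : ∀ m k : ℕ, k + 1 ≤ 2 ^ m → |f ((k + 1) * T / 2 ^ m) - f (k * T / 2 ^ m)| ≤ b * θ ^ m)
    {u : ℝ} (hu0 : 0 ≤ u) (huT : u ≤ T) (m : ℕ) :
    ∀ N, m ≤ N → |f (mufl T N u) - f (mufl T m u)| ≤ b * (θ ^ (m + 1) - θ ^ (N + 1)) / (1 - θ) := by
  intro N hN
  induction N, hN using Nat.le_induction with
  | base => simp
  | succ N hmN ih =>
    have step := mufl_step hT hθ0 hθ1 hb H hu0 huT N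
    have h1θ : 0 < 1 - θ := by linarith
    calc |f (mufl T (N + 1) u) - f (mufl T m u)|
        ≤ |f (mufl T (N + 1) u) - f (mufl T N u)| + |f (mufl T N u) - f (mufl T m u)| :=
          abs_sub_le _ _ _
      _ ≤ b * θ ^ (N + 1) + b * (θ ^ (m + 1) - θ ^ (N + 1)) / (1 - θ) := add_le_add step ih
      _ = b * (θ ^ (m + 1) - θ ^ (N + 1 + 1)) / (1 - θ) := by
          field_simp
          ring

include hT hθ0 hθ1 hb in
lemma mufl_limit (hf : Continuous f)
    (H : ∀ m k : ℕ, k + 1 ≤ 2 ^ m → |f ((k + 1) * T / 2 ^ m) - f (k * T / 2 ^ m)| ≤ b * θ ^ m)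
    {u : ℝ} (hu0 : 0 ≤ u) (huT : u ≤ T) (m : ℕ) :
    |f u - f (mufl T m u)| ≤ b * θ ^ (m + 1) / (1 - θ) := by
  have h1θ : 0 < 1 - θ := by linarith
  have htend : Filter.Tendsto (fun N => mufl T N u) Filter.atTop (nhds u) := by
    rw [tendsto_iff_dist_tendsto_zero]
    refine squeeze_zero (g := fun N => T / 2 ^ N) (fun N => dist_nonneg) (fun N => ?_) ?_
    · have h1 := mufl_le hT hu0 N
      have h2 := lt_mufl_add hT hu0 N
      rw [Real.dist_eq, abs_le]
      constructor <;> [linarith; linarith]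
    · have h3 : Filter.Tendsto (fun N : ℕ => T * (1 / 2) ^ N) Filter.atTop (nhds 0) := by
        rw [show (0:ℝ) = T * 0 by ring]
        exact (tendsto_pow_atTop_nhds_zero_of_lt_one (by norm_num) (by norm_num)).const_mul T
      refine h3.congr fun N => ?_
      rw [div_pow, one_pow]
      ring
  have hftend : Filter.Tendsto (fun N => |f (mufl T N u) - f (mufl T m u)|)
      Filter.atTop (nhds (|f u - f (mufl T m u)|)) :=
    (((hf.tendsto u).comp htend).sub tendsto_const_nhds).abs
  refine le_of_tendsto hftend ?_
  filter_upwards [Filter.eventually_ge_atTop m] with N hN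
  calc |f (mufl T N u) - f (mufl T m u)| ≤ b * (θ ^ (m + 1) - θ ^ (N + 1)) / (1 - θ) :=
        mufl_telescope hT hθ0 hθ1 hb H hu0 huT m N hN
    _ ≤ b * θ ^ (m + 1) / (1 - θ) := by
        gcongr
        nlinarith [pow_nonneg hθ0.le (N + 1)]

include hT hθ0 hθ1 hb in
lemma mufl_adjacent
    (H : ∀ m k : ℕ, k + 1 ≤ 2 ^ m → |f ((k + 1) * T / 2 ^ m) - f (k * T / 2 ^ m)| ≤ b * θ ^ m)
    {u w : ℝ} (hw0 : 0 ≤ w) (hwu : w ≤ u) (huT : u ≤ T) (m : ℕ)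
    (hclose : u - w ≤ T / 2 ^ m) :
    |f (mufl T m u) - f (mufl T m w)| ≤ b * θ ^ m := by
  have h2m : (0:ℝ) < 2 ^ m := by positivity
  set qu : ℝ := u * 2 ^ m / T with hqu
  set qw : ℝ := w * 2 ^ m / T with hqw
  have hqw0 : 0 ≤ qw := by positivity
  have hmono : ⌊qw⌋₊ ≤ ⌊qu⌋₊ := Nat.floor_mono (by rw [hqu, hqw]; gcongr)
  have hup : ⌊qu⌋₊ ≤ ⌊qw⌋₊ + 1 := by
    have hdiff : (u - w) * 2 ^ m ≤ T := (le_div_iff₀ h2m).mp hclose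
    have hq : qu ≤ qw + 1 := by
      rw [hqu, hqw]
      rw [div_add' _ _ _ hT.ne', div_le_div_iff_of_pos_right hT]
      nlinarith
    calc ⌊qu⌋₊ ≤ ⌊qw + 1⌋₊ := Nat.floor_mono hq
      _ = ⌊qw⌋₊ + 1 := by rw [Nat.floor_add_one hqw0]
  have hmu_u : mufl T m u = (⌊qu⌋₊ : ℝ) * T / 2 ^ m := rfl
  have hmu_w : mufl T m w = (⌊qw⌋₊ : ℝ) * T / 2 ^ m := rfl
  rcases (by omega : ⌊qu⌋₊ = ⌊qw⌋₊ ∨ ⌊qu⌋₊ = ⌊qw⌋₊ + 1) with h | h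
  · rw [hmu_u, hmu_w, h, sub_self, abs_zero]
    positivity
  · have hle : ⌊qw⌋₊ + 1 ≤ 2 ^ m := by
      have hqu2 : qu ≤ 2 ^ m := by
        rw [hqu, div_le_iff₀ hT]
        nlinarith
      have : ⌊qu⌋₊ ≤ 2 ^ m := by
        calc ⌊qu⌋₊ ≤ ⌊((2 ^ m : ℕ) : ℝ)⌋₊ := Nat.floor_mono (by push_cast; linarith)
          _ = 2 ^ m := Nat.floor_natCast _
      omega
    have hH := H m ⌊qw⌋₊ hle
    rw [hmu_u, hmu_w, h]
    push_cast
    push_cast at hH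
    exact hH

include hT hθ0 hθ1 hb in
lemma chaining_main (hf : Continuous f)
    (H : ∀ m k : ℕ, k + 1 ≤ 2 ^ m → |f ((k + 1) * T / 2 ^ m) - f (k * T / 2 ^ m)| ≤ b * θ ^ m)
    {u w : ℝ} (hu : u ∈ Set.Icc 0 T) (hw : w ∈ Set.Icc 0 T) (m : ℕ)
    (hclose : |u - w| ≤ T / 2 ^ m) :
    |f u - f w| ≤ b * θ ^ m * (1 + θ) / (1 - θ) := by
  have h1θ : 0 < 1 - θ := by linarith
  have key : ∀ u w : ℝ, w ≤ u → u ∈ Set.Icc 0 T → w ∈ Set.Icc 0 T → u - w ≤ T / 2 ^ m →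
      |f u - f w| ≤ b * θ ^ m * (1 + θ) / (1 - θ) := by
    intro u w hwu hu hw hcl
    have d1 := mufl_limit hT hθ0 hθ1 hb hf H hu.1 hu.2 m
    have d2 := mufl_limit hT hθ0 hθ1 hb hf H hw.1 hw.2 m
    have d3 := mufl_adjacent hT hθ0 hθ1 hb H hw.1 hwu hu.2 m hcl
    have t1 : |f u - f w| ≤ |f u - f (mufl T m u)| + |f (mufl T m u) - f w| := abs_sub_le _ _ _
    have t2 : |f (mufl T m u) - f w|
        ≤ |f (mufl T m u) - f (mufl T m w)| + |f (mufl T m w) - f w| := abs_sub_le _ _ _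
    have d2' : |f (mufl T m w) - f w| = |f w - f (mufl T m w)| := abs_sub_comm _ _
    have heq : b * θ ^ (m + 1) / (1 - θ) + b * θ ^ m + b * θ ^ (m + 1) / (1 - θ)
        = b * θ ^ m * (1 + θ) / (1 - θ) := by field_simp; ring
    rw [d2'] at t2
    linarith
  rcases le_total w u with hwu | huw
  · exact key u w hwu hu hw (by rw [abs_of_nonneg (by linarith)] at hclose; exact hclose)
  · rw [abs_sub_comm]
    refine key w u huw hw hu ?_
    rw [abs_sub_comm, abs_of_nonneg (by linarith)] at hclose
    exact hclose

end chaining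

section
variable {T L b θ : ℝ}

lemma theta_pos (hθ : θ = (2:ℝ) ^ (-(1/6) : ℝ)) : 0 < θ := by
  rw [hθ]; exact Real.rpow_pos_of_pos two_pos _

lemma theta_lt_one (hθ : θ = (2:ℝ) ^ (-(1/6) : ℝ)) : θ < 1 := by
  rw [hθ]; exact Real.rpow_lt_one_of_one_lt_of_neg one_lt_two (by norm_num)

lemma chaining_good (hT : 0 < T) (hL : 0 < L) (hb : 0 < b)
    (hθ : θ = (2:ℝ) ^ (-(1/6) : ℝ))
    (hkey : b * ((1 + θ) / (1 - θ)) * (2:ℝ) ^ ((1:ℝ)/6) / T ^ ((1:ℝ)/6) ≤ L)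
    {f : ℝ → ℝ} (hf : Continuous f)
    (H : ∀ m k : ℕ, k + 1 ≤ 2 ^ m → |f ((k + 1) * T / 2 ^ m) - f (k * T / 2 ^ m)| ≤ b * θ ^ m) :
    ∀ n : ℕ, 1 ≤ n → ∀ t ∈ Set.Icc (0:ℝ) T, ∀ s ∈ Set.Icc (0:ℝ) T,
      |t - s| ≤ (((n:ℝ)) ^ 6)⁻¹ → |f t - f s| ≤ L / n := by
  have hθ0 := theta_pos hθ
  have hθ1 := theta_lt_one hθ
  have h1θ : 0 < 1 - θ := by linarith
  have hK : 0 < (1 + θ) / (1 - θ) := by positivity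
  intro n hn t ht s hs hts
  have hn0 : (0:ℝ) < n := by exact_mod_cast hn
  have hn6 : (0:ℝ) < (n:ℝ) ^ 6 := by positivity
  set m : ℕ := ⌊Real.logb 2 (T * n ^ 6)⌋₊ with hm
  -- two key facts: closeness at level m, and smallness of θ ^ m * n
  have hfacts : |t - s| ≤ T / 2 ^ m ∧
      θ ^ m * n ≤ (2:ℝ) ^ ((1:ℝ)/6) / T ^ ((1:ℝ)/6) := by
    rcases le_or_gt 1 (T * n ^ 6) with hTn | hTn
    · -- case A
      have hTn0 : 0 < T * n ^ 6 := by positivity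
      have hlog0 : 0 ≤ Real.logb 2 (T * n ^ 6) := Real.logb_nonneg one_lt_two hTn
      have hml : (m:ℝ) ≤ Real.logb 2 (T * n ^ 6) := Nat.floor_le hlog0
      have hmu : Real.logb 2 (T * n ^ 6) < (m:ℝ) + 1 := Nat.lt_floor_add_one _
      have h2m_le : (2:ℝ) ^ (m:ℝ) ≤ T * n ^ 6 := by
        calc (2:ℝ) ^ (m:ℝ) ≤ (2:ℝ) ^ Real.logb 2 (T * n ^ 6) :=
              Real.rpow_le_rpow_of_exponent_le one_le_two hml
          _ = T * n ^ 6 := Real.rpow_logb two_pos (by norm_num) hTn0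
      have h2m_gt : T * n ^ 6 < (2:ℝ) ^ ((m:ℝ) + 1) := by
        calc T * n ^ 6 = (2:ℝ) ^ Real.logb 2 (T * n ^ 6) :=
              (Real.rpow_logb two_pos (by norm_num) hTn0).symm
          _ < (2:ℝ) ^ ((m:ℝ) + 1) := Real.rpow_lt_rpow_of_exponent_lt one_lt_two hmu
      have h2mnat : ((2:ℝ) ^ m : ℝ) = (2:ℝ) ^ (m:ℝ) := (Real.rpow_natCast 2 m).symm
      constructor
      · calc |t - s| ≤ ((n:ℝ) ^ 6)⁻¹ := hts
          _ ≤ T / 2 ^ m := by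
            rw [inv_eq_one_div, div_le_div_iff₀ hn6 (by positivity)]
            rw [h2mnat]
            nlinarith [h2m_le]
      · -- θ ^ m * n ≤ 2^{1/6} / T^{1/6}
        have hbase : T * n ^ 6 / 2 ≤ (2:ℝ) ^ (m:ℝ) := by
          have : (2:ℝ) ^ ((m:ℝ) + 1) = 2 * (2:ℝ) ^ (m:ℝ) := by
            rw [Real.rpow_add two_pos, Real.rpow_one]; ring
          rw [this] at h2m_gt
          linarith
        have hθm : θ ^ m = ((2:ℝ) ^ (m:ℝ)) ^ (-(1/6) : ℝ) := by
          rw [hθ, ← Real.rpow_natCast ((2:ℝ) ^ (-(1/6):ℝ)) m, ← Real.rpow_mul two_pos.le,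
            ← Real.rpow_mul two_pos.le]
          ring_nf
        have hpos2m : (0:ℝ) < (2:ℝ) ^ (m:ℝ) := Real.rpow_pos_of_pos two_pos _
        have hbase0 : (0:ℝ) < T * n ^ 6 / 2 := by positivity
        have hmono : (T * n ^ 6 / 2) ^ (-(1/6) : ℝ) ≥ ((2:ℝ) ^ (m:ℝ)) ^ (-(1/6) : ℝ) := by
          have h16 : ((2:ℝ) ^ (m:ℝ)) ^ ((1/6) : ℝ) ≥ (T * n ^ 6 / 2) ^ ((1/6) : ℝ) :=
            Real.rpow_le_rpow hbase0.le hbase (by norm_num)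
          rw [Real.rpow_neg hbase0.le, Real.rpow_neg hpos2m.le]
          exact inv_anti₀ (Real.rpow_pos_of_pos hbase0 _) h16
        have hval : (T * n ^ 6 / 2) ^ (-(1/6) : ℝ) * n = (2:ℝ) ^ ((1:ℝ)/6) / T ^ ((1:ℝ)/6) := by
          rw [show T * (n:ℝ) ^ 6 / 2 = T * (n:ℝ) ^ 6 * 2⁻¹ by ring]
          rw [Real.rpow_neg (by positivity)]
          rw [Real.mul_rpow (by positivity) (by positivity),
            Real.mul_rpow hT.le (by positivity)]
          have hn6r : ((n:ℝ) ^ 6) ^ ((1:ℝ)/6) = n := by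
            rw [← Real.rpow_natCast (n:ℝ) 6, ← Real.rpow_mul (by positivity),
              show ((6:ℕ):ℝ) * ((1:ℝ)/6) = 1 by norm_num, Real.rpow_one]
          have h2r : ((2:ℝ)⁻¹) ^ ((1:ℝ)/6) = ((2:ℝ) ^ ((1:ℝ)/6))⁻¹ :=
            Real.inv_rpow (by norm_num) _
          rw [hn6r, h2r]
          have hTpos : 0 < T ^ ((1:ℝ)/6) := Real.rpow_pos_of_pos hT _
          have h2pos : 0 < (2:ℝ) ^ ((1:ℝ)/6) := Real.rpow_pos_of_pos two_pos _
          field_simp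
        rw [hθm]
        calc ((2:ℝ) ^ (m:ℝ)) ^ (-(1/6) : ℝ) * n ≤ (T * n ^ 6 / 2) ^ (-(1/6) : ℝ) * n := by
              exact mul_le_mul_of_nonneg_right hmono hn0.le
          _ = (2:ℝ) ^ ((1:ℝ)/6) / T ^ ((1:ℝ)/6) := hval
    · -- case B : T * n^6 < 1, m = 0
      have hm0 : m = 0 := by
        rw [hm]
        refine Nat.floor_of_nonpos ?_
        exact Real.logb_nonpos one_lt_two (by positivity) hTn.le
      rw [hm0]
      constructor
      · simp only [pow_zero]
        rw [abs_le]
        constructor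
        · have := ht.1; have := hs.2; simp; linarith
        · have := ht.2; have := hs.1; simp; linarith
      · simp only [pow_zero, one_mul]
        -- n < T^{-1/6} ≤ 2^{1/6}/T^{1/6}
        have h1 : (n:ℝ) ^ 6 < 1 / T := by
          rw [lt_div_iff₀ hT]; nlinarith
        have h2 : (n:ℝ) ≤ (1 / T) ^ ((1:ℝ)/6) := by
          have := Real.rpow_le_rpow (by positivity) h1.le (by norm_num : (0:ℝ) ≤ 1/6)
          rwa [← Real.rpow_natCast (n:ℝ) 6, ← Real.rpow_mul (by positivity),
            show ((6:ℕ):ℝ) * (1/6) = 1 by norm_num, Real.rpow_one] at this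
        have h3 : ((1:ℝ) / T) ^ ((1:ℝ)/6) ≤ (2:ℝ) ^ ((1:ℝ)/6) / T ^ ((1:ℝ)/6) := by
          rw [Real.div_rpow (by norm_num) hT.le, Real.one_rpow]
          have h1le : (1:ℝ) ≤ (2:ℝ) ^ ((1:ℝ)/6) := by
            calc (1:ℝ) = (2:ℝ) ^ (0:ℝ) := (Real.rpow_zero 2).symm
              _ ≤ (2:ℝ) ^ ((1:ℝ)/6) :=
                Real.rpow_le_rpow_of_exponent_le one_le_two (by norm_num)
          have hTpos : 0 < T ^ ((1:ℝ)/6) := Real.rpow_pos_of_pos hT _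
          gcongr
        linarith
  obtain ⟨hclose, hsmall⟩ := hfacts
  have hmain := chaining_main hT hθ0 hθ1 hb.le hf H ht hs m hclose
  refine hmain.trans ?_
  rw [le_div_iff₀ hn0]
  have e1 : b * θ ^ m * (1 + θ) / (1 - θ) * n
      = (b * ((1 + θ) / (1 - θ))) * (θ ^ m * n) := by field_simp
  rw [e1]
  calc (b * ((1 + θ) / (1 - θ))) * (θ ^ m * n)
      ≤ (b * ((1 + θ) / (1 - θ))) * ((2:ℝ) ^ ((1:ℝ)/6) / T ^ ((1:ℝ)/6)) := by
        refine mul_le_mul_of_nonneg_left hsmall (by positivity)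
    _ = b * ((1 + θ) / (1 - θ)) * (2:ℝ) ^ ((1:ℝ)/6) / T ^ ((1:ℝ)/6) := by ring
    _ ≤ L := hkey
end

/-- for a standard Brownian motion `W` on `[0,T]` and
`Σ_L = {ω : ∀ n ≥ 1, sup_{|t-s| ≤ n⁻⁶, t,s ∈ [0,T]} |W(t) - W(s)| ≤ L/n}`,
there is `C = C(T) > 0` with `P(W ∉ Σ_L) ≤ C / L⁴`; consequently for every `ε > 0`
there is `L_ε` with `P(W ∉ Σ_{L_ε}) ≤ ε`. -/
theorem stmt6 (T : ℝ) (hT : 0 < T) :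
    ∃ C > (0 : ℝ), ∀ (Ω : Type) (_ : MeasurableSpace Ω) (P : Measure Ω),
      IsProbabilityMeasure P →
      ∀ W : ℝ → Ω → ℝ, (∀ t, Measurable (W t)) → (∀ ω, Continuous fun t => W t ω) →
      (∀ s t : ℝ, 0 ≤ s → s ≤ t →
        Measure.map (fun ω => W t ω - W s ω) P =
          ProbabilityTheory.gaussianReal 0 (Real.toNNReal (t - s))) →
      (∀ L > (0 : ℝ),
        P {ω | ¬ ∀ n : ℕ, 1 ≤ n → ∀ t ∈ Set.Icc (0 : ℝ) T, ∀ s ∈ Set.Icc (0 : ℝ) T,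
            |t - s| ≤ (((n : ℝ)) ^ 6)⁻¹ → |W t ω - W s ω| ≤ L / n}
          ≤ ENNReal.ofReal (C / L ^ 4)) ∧
      (∀ ε > (0 : ℝ), ∃ L > (0 : ℝ),
        P {ω | ¬ ∀ n : ℕ, 1 ≤ n → ∀ t ∈ Set.Icc (0 : ℝ) T, ∀ s ∈ Set.Icc (0 : ℝ) T,
            |t - s| ≤ (((n : ℝ)) ^ 6)⁻¹ → |W t ω - W s ω| ≤ L / n}
          ≤ ENNReal.ofReal ε) := by
  set θ : ℝ := (2:ℝ) ^ (-(1/6) : ℝ) with hθdef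
  have hθ0 : 0 < θ := Real.rpow_pos_of_pos two_pos _
  have hθ1 : θ < 1 := Real.rpow_lt_one_of_one_lt_of_neg one_lt_two (by norm_num)
  have h1θ : 0 < 1 - θ := by linarith
  set K : ℝ := (1 + θ) / (1 - θ) with hKdef
  have hK0 : 0 < K := by positivity
  have h2_16 : (0:ℝ) < (2:ℝ) ^ ((1:ℝ)/6) := Real.rpow_pos_of_pos two_pos _
  have hT16 : (0:ℝ) < T ^ ((1:ℝ)/6) := Real.rpow_pos_of_pos hT _
  set d : ℝ := T ^ ((1:ℝ)/6) / (K * (2:ℝ) ^ ((1:ℝ)/6)) with hddef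
  have hd0 : 0 < d := by positivity
  set ρ : ℝ := 1 / (2 * θ ^ 4) with hρdef
  have hρ0 : 0 < ρ := by positivity
  have hθ4 : θ ^ 4 = (2:ℝ) ^ (-(2/3) : ℝ) := by
    rw [hθdef, ← Real.rpow_natCast ((2:ℝ) ^ (-(1/6):ℝ)) 4, ← Real.rpow_mul two_pos.le]
    norm_num
  have hhalf : (1:ℝ)/2 < θ ^ 4 := by
    rw [hθ4]
    calc (1:ℝ)/2 = (2:ℝ) ^ (-(1:ℝ)) := by
          rw [Real.rpow_neg_one]; norm_num
      _ < (2:ℝ) ^ (-(2/3) : ℝ) :=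
          Real.rpow_lt_rpow_of_exponent_lt one_lt_two (by norm_num)
  have hρ1 : ρ < 1 := by
    rw [hρdef, div_lt_one (by positivity)]
    linarith
  set C : ℝ := 3 * T ^ 2 / (d ^ 4 * (1 - ρ)) with hCdef
  have hC0 : 0 < C := by
    have : 0 < 1 - ρ := by linarith
    positivity
  refine ⟨C, hC0, ?_⟩
  intro Ω mΩ P hP W hWmeas hWcont hWinc
  have main : ∀ L > (0:ℝ),
      P {ω | ¬ ∀ n : ℕ, 1 ≤ n → ∀ t ∈ Set.Icc (0 : ℝ) T, ∀ s ∈ Set.Icc (0 : ℝ) T,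
          |t - s| ≤ (((n : ℝ)) ^ 6)⁻¹ → |W t ω - W s ω| ≤ L / n}
        ≤ ENNReal.ofReal (C / L ^ 4) := by
    intro L hL
    set b : ℝ := L * d with hbdef
    have hb0 : 0 < b := by positivity
    have hdK : d * (K * (2:ℝ) ^ ((1:ℝ)/6)) = T ^ ((1:ℝ)/6) := by
      rw [hddef]; field_simp
    have hkey : b * K * (2:ℝ) ^ ((1:ℝ)/6) / T ^ ((1:ℝ)/6) ≤ L := by
      refine le_of_eq ?_
      rw [hbdef, div_eq_iff hT16.ne']
      calc L * d * K * (2:ℝ) ^ ((1:ℝ)/6) = L * (d * (K * (2:ℝ) ^ ((1:ℝ)/6))) := by ring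
        _ = L * T ^ ((1:ℝ)/6) := by rw [hdK]
    set S : ℕ → ℕ → Set Ω := fun m k =>
      {ω | k + 1 ≤ 2 ^ m ∧
        b * θ ^ m ≤ |W (((k:ℝ) + 1) * T / 2 ^ m) ω - W ((k:ℝ) * T / 2 ^ m) ω|} with hSdef
    have hsub : {ω | ¬ ∀ n : ℕ, 1 ≤ n → ∀ t ∈ Set.Icc (0 : ℝ) T, ∀ s ∈ Set.Icc (0 : ℝ) T,
          |t - s| ≤ (((n : ℝ)) ^ 6)⁻¹ → |W t ω - W s ω| ≤ L / n}
        ⊆ ⋃ m, ⋃ k, S m k := by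
      intro ω hω
      by_contra hno
      apply hω
      have hno' : ∀ m k : ℕ, ω ∉ S m k := by
        intro m k hmem
        exact hno (Set.mem_iUnion.mpr ⟨m, Set.mem_iUnion.mpr ⟨k, hmem⟩⟩)
      have H : ∀ m k : ℕ, k + 1 ≤ 2 ^ m →
          |(fun t => W t ω) (((k:ℝ) + 1) * T / 2 ^ m) - (fun t => W t ω) ((k:ℝ) * T / 2 ^ m)|
            ≤ b * θ ^ m := by
        intro m k hk
        by_contra hcon
        push_neg at hcon
        exact hno' m k ⟨hk, hcon.le⟩
      exact chaining_good hT hL hb0 hθdef hkey (hWcont ω) H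
    set cm : ℕ → ℝ≥0∞ := fun m => ENNReal.ofReal (3 * (T / 2 ^ m) ^ 2 / (b * θ ^ m) ^ 4)
      with hcmdef
    set g : ℕ → ℕ → ℝ≥0∞ := fun m k => if k + 1 ≤ 2 ^ m then cm m else 0 with hgdef
    have hSbound : ∀ m k : ℕ, P (S m k) ≤ g m k := by
      intro m k
      by_cases hk : k + 1 ≤ 2 ^ m
      · rw [hgdef]
        simp only [if_pos hk]
        set t1 : ℝ := (k:ℝ) * T / 2 ^ m with ht1def
        set t2 : ℝ := ((k:ℝ) + 1) * T / 2 ^ m with ht2def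
        have ht1 : 0 ≤ t1 := by positivity
        have hdiff : t2 - t1 = T / 2 ^ m := by rw [ht1def, ht2def]; ring
        have ht12 : t1 ≤ t2 := by
          have : 0 < T / 2 ^ m := by positivity
          linarith
        have hmap := hWinc t1 t2 ht1 ht12
        have hgm : Measurable fun ω => W t2 ω - W t1 ω := (hWmeas t2).sub (hWmeas t1)
        have hsetm : MeasurableSet {y : ℝ | b * θ ^ m ≤ |y|} :=
          (isClosed_le continuous_const continuous_abs).measurableSet
        have hstep1 : P (S m k) ≤ P {ω | b * θ ^ m ≤ |W t2 ω - W t1 ω|} :=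
          measure_mono (fun ω hω => hω.2)
        have heq : P {ω | b * θ ^ m ≤ |W t2 ω - W t1 ω|}
            = (gaussianReal 0 (t2 - t1).toNNReal) {y | b * θ ^ m ≤ |y|} := by
          rw [← hmap, Measure.map_apply hgm hsetm]
          rfl
        have htail := gaussian_tail ((t2 - t1).toNNReal)
          (show 0 < b * θ ^ m by positivity)
        have hco : (((t2 - t1).toNNReal : ℝ≥0) : ℝ) = T / 2 ^ m := by
          rw [Real.coe_toNNReal _ (by rw [hdiff]; positivity), hdiff]
        rw [hco] at htail
        rw [hcmdef]
        exact hstep1.trans (heq.le.trans htail)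
      · have hempty : S m k = ∅ := by
          ext ω
          simp only [hSdef, Set.mem_setOf_eq, Set.mem_empty_iff_false, iff_false]
          intro hmem
          exact hk hmem.1
        rw [hempty, measure_empty]
        exact zero_le
    have hinner : ∀ m : ℕ, ∑' k, g m k = ((2 ^ m : ℕ) : ℝ≥0∞) * cm m := by
      intro m
      have h1 : ∑' k, g m k = ∑ k ∈ Finset.range (2 ^ m), g m k := by
        refine tsum_eq_sum ?_
        intro k hk
        rw [Finset.mem_range, not_lt] at hk
        rw [hgdef]
        simp only []
        rw [if_neg (show ¬(k + 1 ≤ 2 ^ m) by omega)]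
      rw [h1]
      have h2 : ∀ k ∈ Finset.range (2 ^ m), g m k = cm m := by
        intro k hk
        rw [Finset.mem_range] at hk
        rw [hgdef]
        simp only []
        rw [if_pos (show k + 1 ≤ 2 ^ m by omega)]
      rw [Finset.sum_congr rfl h2, Finset.sum_const, Finset.card_range, nsmul_eq_mul]
    set a : ℝ := 3 * T ^ 2 / b ^ 4 with hadef
    have houter : ∀ m : ℕ, ((2 ^ m : ℕ) : ℝ≥0∞) * cm m = ENNReal.ofReal (a * ρ ^ m) := by
      intro m
      rw [hcmdef, ← ENNReal.ofReal_natCast (2 ^ m), ← ENNReal.ofReal_mul (by positivity)]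
      congr 1
      have hθm : (0:ℝ) < θ ^ m := by positivity
      have h2m : (0:ℝ) < (2:ℝ) ^ m := by positivity
      rw [hadef, hρdef]
      push_cast
      rw [div_pow, mul_pow]
      simp only [one_div, inv_pow, mul_pow, div_pow, ← pow_mul, mul_inv]
      field_simp
      ring
    have hsum : ∑' m : ℕ, ENNReal.ofReal (a * ρ ^ m) = ENNReal.ofReal (C / L ^ 4) := by
      rw [← ENNReal.ofReal_tsum_of_nonneg (fun m => by positivity)
        ((summable_geometric_of_lt_one hρ0.le hρ1).mul_left a)]
      congr 1
      rw [tsum_mul_left, tsum_geometric_of_lt_one hρ0.le hρ1]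
      rw [hCdef, hadef, hbdef]
      have hρ2 : 0 < 1 - ρ := by linarith
      field_simp
    calc P {ω | ¬ ∀ n : ℕ, 1 ≤ n → ∀ t ∈ Set.Icc (0 : ℝ) T, ∀ s ∈ Set.Icc (0 : ℝ) T,
            |t - s| ≤ (((n : ℝ)) ^ 6)⁻¹ → |W t ω - W s ω| ≤ L / n}
        ≤ P (⋃ m, ⋃ k, S m k) := measure_mono hsub
      _ ≤ ∑' m, P (⋃ k, S m k) := measure_iUnion_le _
      _ ≤ ∑' m, ∑' k, P (S m k) := ENNReal.tsum_le_tsum (fun m => measure_iUnion_le _)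
      _ ≤ ∑' m, ∑' k, g m k :=
          ENNReal.tsum_le_tsum (fun m => ENNReal.tsum_le_tsum (fun k => hSbound m k))
      _ = ∑' m, ENNReal.ofReal (a * ρ ^ m) := by
          refine tsum_congr (fun m => ?_)
          rw [hinner m, houter m]
      _ = ENNReal.ofReal (C / L ^ 4) := hsum
  refine ⟨main, ?_⟩
  intro ε hε
  set L : ℝ := (C / ε) ^ ((1:ℝ)/4) + 1 with hLdef
  have hCε : (0:ℝ) ≤ C / ε := by positivity
  have hLbase : (0:ℝ) ≤ (C / ε) ^ ((1:ℝ)/4) := Real.rpow_nonneg hCε _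
  have hL : 0 < L := by positivity
  refine ⟨L, hL, (main L hL).trans (ENNReal.ofReal_le_ofReal ?_)⟩
  have h4 : ((C / ε) ^ ((1:ℝ)/4)) ^ (4:ℕ) = C / ε := by
    rw [← Real.rpow_natCast ((C / ε) ^ ((1:ℝ)/4)) 4, ← Real.rpow_mul hCε,
      show ((1:ℝ)/4) * ((4:ℕ):ℝ) = 1 by norm_num, Real.rpow_one]
  have hL4 : C / ε ≤ L ^ 4 := by
    rw [← h4]
    refine pow_le_pow_left₀ hLbase (by rw [hLdef]; linarith) 4
  rw [div_le_iff₀ (by positivity)]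
  calc C = (C / ε) * ε := by field_simp
    _ ≤ L ^ 4 * ε := by
        refine mul_le_mul_of_nonneg_right hL4 hε.le
    _ = ε * L ^ 4 := by ring
end
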